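/- Let d ≥ 1 and let G = (V,E) be a finite simple graph with n ≥ d+1 vertices. Then a(G, ℓ∞^d) ≤ (n/(n−1)) · ⌊(min_{v ∈ V} deg_G(v))/d⌋. -/

import Mathlib

open scoped Classical
open Matrix

noncomputable section

/-- The list of eigenvalues (roots of the characteristic polynomial, with multiplicity)
of a real matrix, sorted in nondecreasing order. -/
def sortedEigs {m : Type*} [Fintype m] [DecidableEq m] (A : Matrix m m ℝ) : List ℝ :=
  A.charpoly.roots.sort (· ≤ ·)

/-- `eigval A j` is the `j`-th smallest eigenvalue `λ_j(A)` (1-based, with multiplicity). -/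
def eigval {m : Type*} [Fintype m] [DecidableEq m] (A : Matrix m m ℝ) (j : ℕ) : ℝ :=
  (sortedEigs A).getD (j - 1) 0

variable {V : Type*} [Fintype V] [DecidableEq V]

/-- `p` is an ℓ∞-framework position for `G` (i.e. `p ∈ W(G, ℓ∞^d)`): along each edge the
difference of the endpoints is nonzero and has a unique coordinate of maximal absolute
value. -/
def IsLinfPos {d : ℕ} (G : SimpleGraph V) (p : V → Fin d → ℝ) : Prop :=
  ∀ ⦃v w : V⦄, G.Adj v w → p v ≠ p w ∧
    ∃ i : Fin d, ∀ j : Fin d, j ≠ i → |p v j - p w j| < |p v i - p w i|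

/-- The `i`-th monochrome subgraph of the framework `(G, p)` in `ℓ∞^d`: the spanning
subgraph of `G` whose edges are those on which the `i`-th coordinate of the difference of
the endpoints has maximal absolute value. -/
def mono {d : ℕ} (G : SimpleGraph V) (p : V → Fin d → ℝ) (i : Fin d) : SimpleGraph V where
  Adj v w := G.Adj v w ∧ ∀ j : Fin d, |p v j - p w j| ≤ |p v i - p w i|
  symm := by
    refine ⟨?_⟩
    intro v w h
    refine ⟨h.1.symm, fun j => ?_⟩
    rw [abs_sub_comm (p w j), abs_sub_comm (p w i)]
    exact h.2 j
  loopless := ⟨fun v h => G.loopless.irrefl v h.1⟩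

/-- The rigidity matrix `R(G,p)` of a framework in `ℓ∞^d`, with rows indexed by edges and
columns indexed by vertex-coordinate pairs: the row of an edge `vw ∈ E_i` has entry
`sgn((p v − p w) i)` in column `(v, i)`, entry `−sgn((p v − p w) i) = sgn((p w − p v) i)`
in column `(w, i)`, and zeros elsewhere. -/
def rigidity {d : ℕ} (G : SimpleGraph V) (p : V → Fin d → ℝ) :
    Matrix G.edgeSet (V × Fin d) ℝ := fun e vi =>
  if h : vi.1 ∈ (e : Sym2 V) then
    if (mono G p vi.2).Adj vi.1 (Sym2.Mem.other h) then
      Real.sign (p vi.1 vi.2 - p (Sym2.Mem.other h) vi.2)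
    else 0
  else 0

/-- The framework Laplacian `L(G,p) = R(G,p)ᵀ R(G,p)` of a framework in `ℓ∞^d`. -/
def fLap {d : ℕ} (G : SimpleGraph V) (p : V → Fin d → ℝ) :
    Matrix (V × Fin d) (V × Fin d) ℝ :=
  (rigidity G p)ᵀ * rigidity G p

/-- The algebraic connectivity (Fiedler number) `a(H) = λ₂(L(H))` of a finite simple
graph. -/
def algConn (H : SimpleGraph V) : ℝ := eigval (H.lapMatrix ℝ) 2

/-- The algebraic connectivity of `G` in `ℓ∞^d`:
`a(G, ℓ∞^d) = sup { λ_{d+1}(L(G,p)) : p ∈ W(G, ℓ∞^d) }`. -/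
def algConnLinf (d : ℕ) (G : SimpleGraph V) : ℝ :=
  sSup {t : ℝ | ∃ p : V → Fin d → ℝ, IsLinfPos G p ∧ t = eigval (fLap G p) (d + 1)}

end

lemma mono_adj {V : Type*} [Fintype V] [DecidableEq V] {d : ℕ} {G : SimpleGraph V}
    {p : V → Fin d → ℝ} {i : Fin d} {v w : V} :
    (mono G p i).Adj v w ↔ G.Adj v w ∧ ∀ j : Fin d, |p v j - p w j| ≤ |p v i - p w i| :=
  Iff.rfl

noncomputable section AuxProofs

open Polynomial

variable {V : Type*} [Fintype V] [DecidableEq V]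

lemma aux_charpoly_conj {m : Type*} [Fintype m] [DecidableEq m]
    (U D : Matrix m m ℝ) (hU : U * star U = 1) :
    (U * D * star U).charpoly = D.charpoly := by
  have hmap : ((U * star U).map (C : ℝ → ℝ[X])) = 1 := by
    rw [hU]; ext i j; simp [Matrix.one_apply, apply_ite C]
  have key : charmatrix (U * D * star U) =
      U.map C * charmatrix D * (star U).map C := by
    unfold charmatrix
    rw [Matrix.mul_sub, Matrix.sub_mul]
    congr 1
    · rw [Matrix.scalar_apply, ← Matrix.smul_one_eq_diagonal, Matrix.mul_smul, mul_one,
        Matrix.smul_mul, ← Matrix.map_mul, hmap, Matrix.smul_one_eq_diagonal, ← Matrix.scalar_apply]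
    · show (U * D * star U).map (C : ℝ → ℝ[X]) = U.map C * D.map C * (star U).map C
      rw [← Matrix.map_mul, ← Matrix.map_mul]
  have hdet : (U.map (C : ℝ → ℝ[X])).det * ((star U).map (C : ℝ → ℝ[X])).det = 1 := by
    rw [← Matrix.det_mul, ← Matrix.map_mul, hmap, Matrix.det_one]
  unfold Matrix.charpoly
  rw [key, Matrix.det_mul, Matrix.det_mul, mul_comm, ← mul_assoc, mul_comm _ ((U.map C).det),
    hdet, one_mul]

lemma aux_charpoly_diagonal {m : Type*} [Fintype m] [DecidableEq m] (f : m → ℝ) :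
    (Matrix.diagonal f).charpoly = ∏ i, (X - C (f i)) := by
  have : charmatrix (Matrix.diagonal f) = Matrix.diagonal (fun i => X - C (f i)) := by
    ext i j
    by_cases h : i = j
    · subst h; simp
    · rw [charmatrix_apply_ne _ _ _ h, Matrix.diagonal_apply_ne _ h, Matrix.diagonal_apply_ne _ h]
      simp
  rw [Matrix.charpoly, this, Matrix.det_diagonal]

/-- roots of the charpoly of a real symmetric matrix = its Hermitian eigenvalues. -/
lemma aux_roots_eq {m : Type*} [Fintype m] [DecidableEq m] {A : Matrix m m ℝ}
    (hA : A.IsHermitian) :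
    A.charpoly.roots = (Finset.univ.val.map hA.eigenvalues) := by
  have hsp := hA.spectral_theorem
  have h1 : (hA.eigenvectorUnitary : Matrix m m ℝ) * star (hA.eigenvectorUnitary : Matrix m m ℝ) = 1 := by
    exact Matrix.mem_unitaryGroup_iff.mp hA.eigenvectorUnitary.2
  have : A.charpoly = (Matrix.diagonal hA.eigenvalues).charpoly := by
    conv_lhs => rw [hsp]
    have := aux_charpoly_conj (hA.eigenvectorUnitary : Matrix m m ℝ)
      (Matrix.diagonal hA.eigenvalues) h1
    simpa using this
  rw [this, aux_charpoly_diagonal]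
  have : (∏ i, (X - C (hA.eigenvalues i))) =
      ((Finset.univ.val.map hA.eigenvalues).map fun a => X - C a).prod := by
    rw [Multiset.map_map, Finset.prod]
    rfl
  rw [this, Polynomial.roots_multiset_prod_X_sub_C]
lemma aux_sorted_getD_le {l : List ℝ} (hl : l.Pairwise (· ≤ ·)) {k : ℕ} {B : ℝ}
    (h : k + 1 ≤ l.countP (fun x => decide (x ≤ B))) : l.getD k 0 ≤ B := by
  by_contra hB
  push_neg at hB
  have hk : k < l.length := by
    by_contra hk
    push_neg at hk
    exact absurd (le_trans h (le_trans List.countP_le_length hk)) (by omega)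
  have hget : l.getD k 0 = l[k] := List.getD_eq_getElem l 0 hk
  rw [hget] at hB
  have hsplit : l.countP (fun x => decide (x ≤ B)) =
      (l.take k).countP (fun x => decide (x ≤ B)) +
      (l.drop k).countP (fun x => decide (x ≤ B)) := by
    conv_lhs => rw [← List.take_append_drop k l]
    rw [List.countP_append]
  have htake : (l.take k).countP (fun x => decide (x ≤ B)) ≤ k :=
    le_trans List.countP_le_length (by simp)
  have hdrop : (l.drop k).countP (fun x => decide (x ≤ B)) = 0 := by
    rw [List.countP_eq_zero]
    intro x hx
    have hdropeq : l.drop k = l[k] :: l.drop (k + 1) := List.drop_eq_getElem_cons hk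
    have hsorted : (l.drop k).Pairwise (· ≤ ·) := hl.sublist (List.drop_sublist k l)
    rw [hdropeq] at hx hsorted
    have hle : l[k] ≤ x := by
      rcases List.mem_cons.mp hx with hx | hx
      · exact le_of_eq hx.symm
      · exact List.rel_of_pairwise_cons hsorted hx
    simp only [decide_eq_true_eq]
    intro hxB
    exact absurd (lt_of_lt_of_le hB hle) (not_lt.mpr hxB)
  omega

lemma aux_sum_dot {ι κ : Type*} [Fintype ι] [Fintype κ] (g : ι → κ → ℝ) (c : ι → ℝ)
    (w : κ → ℝ) : (∑ i, c i • g i) ⬝ᵥ w = ∑ i, c i * (g i ⬝ᵥ w) := by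
  simp only [dotProduct, Finset.sum_apply, Pi.smul_apply, smul_eq_mul, Finset.sum_mul,
    Finset.mul_sum]
  rw [Finset.sum_comm]
  exact Finset.sum_congr rfl fun i _ => Finset.sum_congr rfl fun x _ => by ring

lemma aux_repr_dot {ι κ : Type*} [Fintype ι] [Fintype κ] (g : ι → κ → ℝ)
    (hg1 : ∀ i, g i ⬝ᵥ g i = 1) (hg0 : ∀ i j, i ≠ j → g i ⬝ᵥ g j = 0) (c : ι → ℝ) (j : ι) :
    (∑ i, c i • g i) ⬝ᵥ g j = c j := by
  rw [aux_sum_dot]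
  rw [Finset.sum_eq_single_of_mem j (Finset.mem_univ j)
    (fun i _ hij => by rw [hg0 i j hij, mul_zero])]
  rw [hg1, mul_one]

lemma aux_li {ι κ : Type*} [Fintype ι] [Fintype κ] (g : ι → κ → ℝ)
    (hg1 : ∀ i, g i ⬝ᵥ g i = 1) (hg0 : ∀ i j, i ≠ j → g i ⬝ᵥ g j = 0) :
    LinearIndependent ℝ g := by
  rw [Fintype.linearIndependent_iff]
  intro c hc j
  have := congrArg (fun u => u ⬝ᵥ g j) hc
  simpa [aux_repr_dot g hg1 hg0 c j] using this

lemma aux_dot_sum {ι κ : Type*} [Fintype ι] [Fintype κ] (g : ι → κ → ℝ)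
    (hg1 : ∀ i, g i ⬝ᵥ g i = 1) (hg0 : ∀ i j, i ≠ j → g i ⬝ᵥ g j = 0) (c e : ι → ℝ) :
    (∑ i, c i • g i) ⬝ᵥ (∑ j, e j • g j) = ∑ i, c i * e i := by
  rw [aux_sum_dot]
  refine Finset.sum_congr rfl fun i _ => ?_
  rw [dotProduct_comm, aux_repr_dot g hg1 hg0 e i]

lemma aux_count {κ : Type*} [Fintype κ] [DecidableEq κ] {L : Matrix κ κ ℝ}
    (hL : L.IsHermitian) {ι : Type*} [Fintype ι] (g : ι → κ → ℝ)
    (hg1 : ∀ i, g i ⬝ᵥ g i = 1) (hg0 : ∀ i j, i ≠ j → g i ⬝ᵥ g j = 0) {B : ℝ}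
    (hQ : ∀ u ∈ Submodule.span ℝ (Set.range g), u ⬝ᵥ (L *ᵥ u) ≤ B * (u ⬝ᵥ u)) :
    Fintype.card ι ≤ (Finset.univ.filter fun j : κ => hL.eigenvalues j ≤ B).card := by
  classical
  set b : κ → κ → ℝ := fun j => (hL.eigenvectorBasis j : EuclideanSpace ℝ κ) with hb
  have hbo : ∀ i j, b i ⬝ᵥ b j = if i = j then 1 else 0 := by
    intro i j
    have := (orthonormal_iff_ite (𝕜 := ℝ)).mp hL.eigenvectorBasis.orthonormal i j
    simp only [PiLp.inner_apply, RCLike.inner_apply, conj_trivial] at this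
    rw [dotProduct]
    rw [← this]
    exact Finset.sum_congr rfl fun x _ => mul_comm _ _
  have hbe : ∀ j, L *ᵥ b j = hL.eigenvalues j • b j := fun j => hL.mulVec_eigenvectorBasis j
  by_contra hcon
  push_neg at hcon
  set S : Finset κ := Finset.univ.filter (fun j : κ => hL.eigenvalues j ≤ B) with hS
  set T : Finset κ := Sᶜ with hT
  set gT : ↥T → κ → ℝ := fun j => b j.val with hgTdef
  have hgT1 : ∀ i : ↥T, gT i ⬝ᵥ gT i = 1 := by
    intro i; rw [hgTdef]; simp only; rw [hbo]; simp
  have hgT0 : ∀ i j : ↥T, i ≠ j → gT i ⬝ᵥ gT j = 0 := by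
    intro i j hij; rw [hgTdef]; simp only; rw [hbo]
    rw [if_neg (fun hv => hij (Subtype.ext hv))]
  set U := Submodule.span ℝ (Set.range g) with hU
  set W := Submodule.span ℝ (Set.range gT) with hW
  have hrU : Module.finrank ℝ U = Fintype.card ι := finrank_span_eq_card (aux_li g hg1 hg0)
  have hrW : Module.finrank ℝ W = T.card := by
    rw [hW, finrank_span_eq_card (aux_li gT hgT1 hgT0), Fintype.card_coe]
  have hnd : ¬ Disjoint U W := by
    intro hdis
    have hle := Submodule.finrank_add_finrank_le_of_disjoint hdis
    rw [hrU, hrW, Module.finrank_pi] at hle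
    have hTcard : T.card = Fintype.card κ - S.card := by rw [hT, Finset.card_compl]
    have hScard : S.card ≤ Fintype.card κ := Finset.card_le_univ S
    omega
  rw [Submodule.disjoint_def] at hnd
  push_neg at hnd
  obtain ⟨u, huU, huW, hune⟩ := hnd
  obtain ⟨c, hc⟩ := (Submodule.mem_span_range_iff_exists_fun ℝ).mp huW
  have hcex : ∃ j, c j ≠ 0 := by
    by_contra hall
    push_neg at hall
    apply hune
    rw [← hc]
    simp [hall]
  obtain ⟨j₀, hj₀⟩ := hcex
  have hLu : L *ᵥ u = ∑ i, (c i * hL.eigenvalues i.val) • gT i := by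
    rw [← hc, ← Matrix.mulVecLin_apply, map_sum]
    refine Finset.sum_congr rfl fun i _ => ?_
    rw [_root_.map_smul, Matrix.mulVecLin_apply]
    show c i • (L *ᵥ b i.val) = _
    rw [hbe i.val, smul_smul]
  have hQu : u ⬝ᵥ (L *ᵥ u) = ∑ i, c i * (c i * hL.eigenvalues i.val) := by
    rw [hLu, ← hc, aux_dot_sum gT hgT1 hgT0]
  have hnu : u ⬝ᵥ u = ∑ i, c i * c i := by rw [← hc, aux_dot_sum gT hgT1 hgT0]
  have hgt : ∀ i : ↥T, B < hL.eigenvalues i.val := by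
    intro i
    have hiT : i.val ∉ S := Finset.mem_compl.mp i.prop
    by_contra hle
    push_neg at hle
    exact hiT (Finset.mem_filter.mpr ⟨Finset.mem_univ _, hle⟩)
  have hpos : 0 < ∑ i, (hL.eigenvalues i.val - B) * (c i * c i) := by
    refine Finset.sum_pos' (fun i _ => mul_nonneg (by linarith [hgt i]) (mul_self_nonneg _)) ?_
    exact ⟨j₀, Finset.mem_univ j₀, mul_pos (by linarith [hgt j₀]) (mul_self_pos.mpr hj₀)⟩
  have hle := hQ u huU
  rw [hQu, hnu] at hle
  have hexp : ∑ i, (hL.eigenvalues i.val - B) * (c i * c i) =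
      (∑ i, c i * (c i * hL.eigenvalues i.val)) - B * ∑ i, c i * c i := by
    rw [Finset.mul_sum, ← Finset.sum_sub_distrib]
    exact Finset.sum_congr rfl fun i _ => by ring
  rw [hexp] at hpos
  linarith

variable {V : Type*} [Fintype V] [DecidableEq V]

lemma aux_two_point {α : Type*} [Fintype α] [DecidableEq α] {a b : α} (hab : a ≠ b) (σ : ℝ)
    (u : α → ℝ) :
    ∑ x, (if x = a then σ else if x = b then -σ else 0) * u x = σ * (u a - u b) := by
  have key : ∀ x, (if x = a then σ else if x = b then -σ else 0) * u x
      = (if x = a then σ * u a else 0) + (if x = b then -(σ * u b) else 0) := by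
    intro x
    by_cases hxa : x = a
    · subst hxa
      rw [if_pos rfl, if_pos rfl, if_neg hab]
      ring
    · rw [if_neg hxa, if_neg hxa]
      by_cases hxb : x = b
      · subst hxb
        rw [if_pos rfl, if_pos rfl]
        ring
      · rw [if_neg hxb, if_neg hxb]
        ring
  simp only [key]
  rw [Finset.sum_add_distrib, Finset.sum_ite_eq' Finset.univ a, Finset.sum_ite_eq' Finset.univ b]
  simp only [Finset.mem_univ, if_true]
  ring

lemma aux_edge {d : ℕ} {G : SimpleGraph V} {p : V → Fin d → ℝ} (hp : IsLinfPos G p)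
    {a b : V} (hab : G.Adj a b) :
    ∃ i : Fin d, ∃ σ : ℝ, σ * σ = 1 ∧ (mono G p i).Adj a b ∧
      (∀ k, (mono G p k).Adj a b → k = i) ∧
      ∀ (he : s(a,b) ∈ G.edgeSet) (u : V × Fin d → ℝ),
        (rigidity G p *ᵥ u) ⟨s(a,b), he⟩ = σ * (u (a, i) - u (b, i)) := by
  obtain ⟨hne, i, hi⟩ := hp hab
  have hΔ : p a i - p b i ≠ 0 := by
    intro h0
    apply hne
    funext j
    by_cases hj : j = i
    · subst hj; linarith [sub_eq_zero.mp h0]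
    · have := hi j hj
      rw [h0, abs_zero] at this
      exact absurd this (not_lt.mpr (abs_nonneg _))
  set σ := Real.sign (p a i - p b i) with hσ
  have hσσ : σ * σ = 1 := by
    rcases lt_or_gt_of_ne hΔ with h | h
    · rw [hσ, Real.sign_of_neg h]; norm_num
    · rw [hσ, Real.sign_of_pos h]; norm_num
  have hmono : (mono G p i).Adj a b := by
    refine mono_adj.mpr ⟨hab, fun j => ?_⟩
    by_cases hj : j = i
    · subst hj; exact le_refl _
    · exact (hi j hj).le
  have huniq : ∀ k, (mono G p k).Adj a b → k = i := by
    intro k hk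
    by_contra hki
    exact absurd ((mono_adj.mp hk).2 i) (not_le.mpr (hi k hki))
  refine ⟨i, σ, hσσ, hmono, huniq, ?_⟩
  intro he u
  have hne' : a ≠ b := hab.ne
  have hrow : ∀ vi : V × Fin d, rigidity G p ⟨s(a,b), he⟩ vi =
      (if vi = (a, i) then σ else if vi = (b, i) then -σ else 0) := by
    rintro ⟨w, k⟩
    show (if h : w ∈ s(a,b) then _ else (0:ℝ)) = _
    by_cases hw : w ∈ s(a,b)
    · rw [dif_pos hw]
      rcases Sym2.mem_iff.mp hw with hwa | hwb
      · subst hwa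
        have hother : Sym2.Mem.other hw = b := by
          have := Sym2.other_spec hw
          exact (Sym2.congr_right.mp this)
        rw [hother]
        by_cases hk : k = i
        · subst hk
          rw [if_pos hmono, if_pos (by simp)]
        · rw [if_neg (fun hm => hk (huniq k hm)), if_neg (by simp [hne', hk]),
            if_neg (by simp [hk])]
      · subst hwb
        have hother : Sym2.Mem.other hw = a := by
          have h1 := Sym2.other_spec hw
          rw [Sym2.eq_swap] at h1
          exact (Sym2.congr_left.mp h1)
        rw [hother]
        by_cases hk : k = i
        · subst hk
          rw [if_pos hmono.symm, if_neg (by simp [hne'.symm]), if_pos (by simp)]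
          rw [hσ, ← Real.sign_neg]
          congr 1
          ring
        · rw [if_neg (fun hm => hk (huniq k hm.symm)), if_neg (by simp [hne', hk]),
            if_neg (by simp [hk])]
    · rw [dif_neg hw]
      have hwa : w ≠ a := fun h => hw (h ▸ Sym2.mem_mk_left a b)
      have hwb : w ≠ b := fun h => hw (h ▸ Sym2.mem_mk_right a b)
      rw [if_neg (by simp [hwa]), if_neg (by simp [hwb])]
  show (fun vi => rigidity G p ⟨s(a,b), he⟩ vi) ⬝ᵥ u = _
  simp only [hrow]
  exact aux_two_point (by simp [Prod.ext_iff, hne']) σ u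

lemma aux_pigeon {d : ℕ} {G : SimpleGraph V} {p : V → Fin d → ℝ} (hp : IsLinfPos G p)
    (hd : 1 ≤ d) (v : V) : ∃ i₀ : Fin d, (mono G p i₀).degree v ≤ G.degree v / d := by
  have hkey : ∑ i : Fin d, (mono G p i).degree v = G.degree v := by
    have hnb : ∀ i : Fin d, (mono G p i).neighborFinset v =
        (G.neighborFinset v).filter (fun w => (mono G p i).Adj v w) := by
      intro i
      ext w
      simp only [SimpleGraph.mem_neighborFinset, Finset.mem_filter]
      exact ⟨fun h => ⟨(mono_adj.mp h).1, h⟩, fun h => h.2⟩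
    simp only [SimpleGraph.degree, hnb, Finset.card_filter]
    rw [Finset.sum_comm]
    rw [Finset.card_eq_sum_ones (G.neighborFinset v)]
    refine Finset.sum_congr rfl fun w hw => ?_
    have hvw : G.Adj v w := (SimpleGraph.mem_neighborFinset G v w).mp hw
    obtain ⟨i, σ, _, hmono, huniq, _⟩ := aux_edge hp hvw
    rw [Finset.sum_congr rfl (fun k _ => show (if (mono G p k).Adj v w then 1 else 0)
      = if k = i then 1 else 0 by
        by_cases hk : (mono G p k).Adj v w
        · rw [if_pos hk, if_pos (huniq k hk)]
        · have hki : ¬ k = i := fun he => hk (by rw [he]; exact hmono)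
          rw [if_neg hk, if_neg hki])]
    simp
  by_contra hcon
  push_neg at hcon
  have hlow : ∀ i : Fin d, G.degree v / d + 1 ≤ (mono G p i).degree v := fun i => hcon i
  have hsum : d * (G.degree v / d + 1) ≤ ∑ i : Fin d, (mono G p i).degree v := by
    calc d * (G.degree v / d + 1) = ∑ _i : Fin d, (G.degree v / d + 1) := by
          rw [Finset.sum_const, Finset.card_univ, Fintype.card_fin, smul_eq_mul]
      _ ≤ _ := Finset.sum_le_sum fun i _ => hlow i
  rw [hkey] at hsum
  have h1 : d * (G.degree v / d + 1) = d * (G.degree v / d) + d := Nat.mul_succ d _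
  have h2 : d * (G.degree v / d) + G.degree v % d = G.degree v := Nat.div_add_mod _ _
  have h3 : G.degree v % d < d := Nat.mod_lt _ (by omega)
  rw [h1] at hsum
  have h4 : d * (G.degree v / d) + d ≤ d * (G.degree v / d) + G.degree v % d := by
    rw [h2]; exact hsum
  have := Nat.le_of_add_le_add_left h4
  omega

def mk' {V : Type*} {d : ℕ} (i : Fin d) (φ : V → ℝ) : V × Fin d → ℝ :=
  fun wk => if wk.2 = i then φ wk.1 else 0

lemma aux_mk_dot {V : Type*} [Fintype V] {d : ℕ} (i j : Fin d) (φ ψ : V → ℝ) :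
    (mk' i φ) ⬝ᵥ (mk' j ψ) = if i = j then ∑ w, φ w * ψ w else 0 := by
  rw [dotProduct, Fintype.sum_prod_type]
  have hterm : ∀ (w : V) (k : Fin d), mk' i φ (w, k) * mk' j ψ (w, k)
      = if k = i then (if i = j then φ w * ψ w else 0) else 0 := by
    intro w k
    simp only [mk']
    split_ifs <;> simp_all
  simp only [hterm]
  rw [Finset.sum_congr rfl fun w _ =>
    Finset.sum_ite_eq' Finset.univ i (fun _ => if i = j then φ w * ψ w else 0)]
  simp only [Finset.mem_univ, if_true]
  by_cases h2 : i = j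
  · simp only [if_pos h2]
  · simp only [if_neg h2, Finset.sum_const_zero]

lemma aux_perposition {V : Type*} [Fintype V] [DecidableEq V] {d : ℕ} (hd : 1 ≤ d)
    (G : SimpleGraph V) (hV : d + 1 ≤ Fintype.card V)
    (p : V → Fin d → ℝ) (hp : IsLinfPos G p) {B : ℝ}
    (hB : B = ((Fintype.card V : ℝ) / ((Fintype.card V : ℝ) - 1)) * ((G.minDegree / d : ℕ) : ℝ))
    (hL : (fLap G p).IsHermitian) :
    d + 1 ≤ (Finset.univ.filter fun j : V × Fin d => hL.eigenvalues j ≤ B).card := by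
  classical
  have hn2 : 2 ≤ Fintype.card V := by omega
  set nR : ℝ := (Fintype.card V : ℝ) with hnR
  have hnR2 : (2:ℝ) ≤ nR := by rw [hnR]; exact_mod_cast hn2
  have hnR0 : (0:ℝ) < nR := by linarith
  have hnR1 : (0:ℝ) < nR - 1 := by linarith
  haveI : Nonempty V := Fintype.card_pos_iff.mp (by omega)
  obtain ⟨v, hv⟩ := G.exists_minimal_degree_vertex
  obtain ⟨i₀, hi₀⟩ := aux_pigeon hp hd v
  have hB0 : 0 ≤ B := by
    rw [hB]
    exact mul_nonneg (div_nonneg (by linarith) (by linarith)) (Nat.cast_nonneg _)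
  have hmvL : ∀ u, fLap G p *ᵥ u = (rigidity G p)ᵀ *ᵥ (rigidity G p *ᵥ u) := by
    intro u
    have hflap : fLap G p = (rigidity G p)ᵀ * rigidity G p := rfl
    rw [hflap, ← Matrix.mulVec_mulVec]
  have hQform : ∀ u, u ⬝ᵥ (fLap G p *ᵥ u) = (rigidity G p *ᵥ u) ⬝ᵥ (rigidity G p *ᵥ u) := by
    intro u
    rw [hmvL, Matrix.dotProduct_mulVec, Matrix.vecMul_transpose]
  have hLsym : (fLap G p)ᵀ = fLap G p := by
    show ((rigidity G p)ᵀ * rigidity G p)ᵀ = _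
    rw [Matrix.transpose_mul, Matrix.transpose_transpose]
    rfl
  have hsymdot : ∀ u w, u ⬝ᵥ (fLap G p *ᵥ w) = (fLap G p *ᵥ u) ⬝ᵥ w := by
    intro u w
    rw [Matrix.dotProduct_mulVec]
    conv_lhs => rw [← hLsym]
    rw [Matrix.vecMul_transpose]
  -- test vectors
  set ev : V → ℝ := fun w => if w = v then 1 else 0 with hev
  set φx : V → ℝ := fun w => ev w - 1/nR with hφx
  have hev_sum : ∑ w, ev w = 1 := by
    rw [hev, Finset.sum_ite_eq' Finset.univ v (fun _ => (1:ℝ))]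
    simp
  have hev_sq : ∀ w, ev w * ev w = ev w := by
    intro w
    rw [hev]
    by_cases h : w = v <;> simp [h]
  have hconst : ∀ (c : ℝ), ∑ _w : V, c = nR * c := by
    intro c
    rw [Finset.sum_const, Finset.card_univ, nsmul_eq_mul, hnR]
  have hφ1 : ∑ w, φx w * 1 = 0 := by
    simp only [hφx, mul_one]
    rw [Finset.sum_sub_distrib, hev_sum, hconst]
    field_simp
    ring
  have hφφ : ∑ w, φx w * φx w = (nR - 1)/nR := by
    have hexp : ∀ w, φx w * φx w = (ev w * ev w - (2/nR) * ev w) + 1/(nR*nR) := by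
      intro w
      rw [hφx]
      ring
    rw [Finset.sum_congr rfl fun w _ => hexp w, Finset.sum_add_distrib,
      Finset.sum_sub_distrib, ← Finset.mul_sum, hev_sum,
      Finset.sum_congr rfl fun w _ => hev_sq w, hev_sum, hconst]
    field_simp
    ring
  set y : Fin d → V × Fin d → ℝ := fun i => mk' i (fun _ => 1) with hy
  set x₀ : V × Fin d → ℝ := mk' i₀ φx with hx₀
  set sn : ℝ := Real.sqrt nR with hsn
  set rr : ℝ := Real.sqrt ((nR - 1)/nR) with hrr
  have hsn2 : sn * sn = nR := Real.mul_self_sqrt (by linarith)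
  have hrr2 : rr * rr = (nR-1)/nR := Real.mul_self_sqrt (by positivity)
  have hsn0 : sn ≠ 0 := by
    intro h
    rw [h, mul_zero] at hsn2
    linarith
  have hrr0 : rr ≠ 0 := by
    intro h
    rw [h, mul_zero] at hrr2
    have : (0:ℝ) < (nR-1)/nR := by positivity
    linarith
  set g : Option (Fin d) → V × Fin d → ℝ :=
    fun o => Option.elim o (rr⁻¹ • x₀) (fun i => sn⁻¹ • y i) with hg
  have hgnone : g none = rr⁻¹ • x₀ := rfl
  have hgsome : ∀ i, g (some i) = sn⁻¹ • y i := fun i => rfl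
  have hyy : ∀ i j, y i ⬝ᵥ y j = if i = j then nR else 0 := by
    intro i j
    rw [hy]
    simp only
    rw [aux_mk_dot]
    by_cases h : i = j
    · rw [if_pos h, if_pos h]
      rw [hconst (1*1)]
      ring
    · rw [if_neg h, if_neg h]
  have hxy : ∀ i, x₀ ⬝ᵥ y i = 0 := by
    intro i
    rw [hx₀, hy]
    simp only
    rw [aux_mk_dot]
    by_cases h : i₀ = i
    · rw [if_pos h, hφ1]
    · rw [if_neg h]
  have hxx : x₀ ⬝ᵥ x₀ = (nR-1)/nR := by
    rw [hx₀, aux_mk_dot, if_pos rfl, hφφ]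
  have hg1 : ∀ o, g o ⬝ᵥ g o = 1 := by
    intro o
    match o with
    | none =>
      rw [hgnone, smul_dotProduct, dotProduct_smul, hxx, smul_eq_mul, smul_eq_mul]
      rw [← hrr2]
      field_simp
    | some i =>
      rw [hgsome, smul_dotProduct, dotProduct_smul, hyy, if_pos rfl,
        smul_eq_mul, smul_eq_mul, ← hsn2]
      field_simp
  have hg0 : ∀ o o', o ≠ o' → g o ⬝ᵥ g o' = 0 := by
    intro o o' hne
    match o, o' with
    | none, none => exact absurd rfl hne
    | none, some i =>
      rw [hgnone, hgsome, smul_dotProduct, dotProduct_smul, hxy i]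
      simp
    | some i, none =>
      rw [hgnone, hgsome, smul_dotProduct, dotProduct_smul,
        dotProduct_comm, hxy i]
      simp
    | some i, some j =>
      have hij : i ≠ j := fun h => hne (by rw [h])
      rw [hgsome, hgsome, smul_dotProduct, dotProduct_smul, hyy, if_neg hij]
      simp
  -- rigidity kills the y's
  have hRy : ∀ i, rigidity G p *ᵥ y i = 0 := by
    intro i
    funext e
    obtain ⟨e, he⟩ := e
    revert he
    induction e using Sym2.ind with
    | _ a b =>
      intro he
      have hab : G.Adj a b := G.mem_edgeSet.mp he
      obtain ⟨ie, σ, hσσ, hm, hu, hrow⟩ := aux_edge hp hab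
      rw [Pi.zero_apply, hrow he (y i), hy]
      simp only [mk']
      simp
  have hLy : ∀ i, fLap G p *ᵥ y i = 0 := fun i => by
    rw [hmvL, hRy, Matrix.mulVec_zero]
  have hLgsome : ∀ i, fLap G p *ᵥ g (some i) = 0 := fun i => by
    rw [hgsome, Matrix.mulVec_smul, hLy, smul_zero]
  have hdeg : (mono G p i₀).degree v ≤ G.minDegree / d := by
    rw [hv]
    exact hi₀
  -- quadratic form of x₀ equals the monochromatic degree
  have hQx₀ : x₀ ⬝ᵥ (fLap G p *ᵥ x₀) = ((mono G p i₀).degree v : ℝ) := by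
    rw [hQform, dotProduct]
    have hpt : ∀ e : G.edgeSet, (rigidity G p *ᵥ x₀) e * (rigidity G p *ᵥ x₀) e =
        if (e : Sym2 V) ∈ (mono G p i₀).incidenceSet v then 1 else 0 := by
      rintro ⟨e, he⟩
      revert he
      induction e using Sym2.ind with
      | _ a b =>
        intro he
        have hab : G.Adj a b := G.mem_edgeSet.mp he
        have hne : a ≠ b := hab.ne
        obtain ⟨ie, σ, hσσ, hm, hu, hrow⟩ := aux_edge hp hab
        rw [hrow he x₀, hx₀]
        simp only [mk']
        by_cases hie : ie = i₀
        · rw [if_pos hie, if_pos hie]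
          have hmem : s(a,b) ∈ (mono G p i₀).incidenceSet v ↔ (a = v ∨ b = v) := by
            rw [SimpleGraph.mk'_mem_incidenceSet_iff]
            constructor
            · rintro ⟨_, h⟩
              exact h.imp Eq.symm Eq.symm
            · intro h
              exact ⟨hie ▸ hm, h.imp Eq.symm Eq.symm⟩
          by_cases hva : a = v
          · by_cases hvb : b = v
            · exact absurd (hva.trans hvb.symm) hne
            · have hd1 : φx a - φx b = 1 := by
                rw [hφx]
                simp only
                rw [hev]
                simp only
                rw [if_pos hva, if_neg hvb]
                ring
              rw [hd1, if_pos (hmem.mpr (Or.inl hva))]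
              rw [mul_one]
              exact hσσ
          · by_cases hvb : b = v
            · have hd1 : φx a - φx b = -1 := by
                rw [hφx]
                simp only
                rw [hev]
                simp only
                rw [if_neg hva, if_pos hvb]
                ring
              rw [hd1, if_pos (hmem.mpr (Or.inr hvb))]
              calc σ * (-1) * (σ * (-1)) = σ * σ := by ring
                _ = 1 := hσσ
            · have hd1 : φx a - φx b = 0 := by
                rw [hφx]
                simp only
                rw [hev]
                simp only
                rw [if_neg hva, if_neg hvb]
                ring
              rw [hd1, if_neg (fun hmm => by
                rcases hmem.mp hmm with h | h
                · exact hva h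
                · exact hvb h)]
              ring
        · rw [if_neg hie, if_neg hie]
          have hmem : s(a,b) ∉ (mono G p i₀).incidenceSet v := by
            intro hmem
            rw [SimpleGraph.mk'_mem_incidenceSet_iff] at hmem
            exact hie (hu i₀ hmem.1).symm
          rw [if_neg hmem]
          ring
    rw [Finset.sum_congr rfl fun e _ => hpt e]
    rw [← Finset.sum_toFinset_eq_subtype (fun e => e ∈ G.edgeSet)
      (fun e => if e ∈ (mono G p i₀).incidenceSet v then (1:ℝ) else 0)]
    rw [Finset.sum_boole]
    have hle : mono G p i₀ ≤ G := fun a b h => (mono_adj.mp h).1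
    have hsub : ({x | x ∈ G.edgeSet}.toFinset.filter
        (fun e => e ∈ (mono G p i₀).incidenceSet v)) = (mono G p i₀).incidenceFinset v := by
      ext e
      simp only [Finset.mem_filter, Set.mem_toFinset, Set.mem_setOf_eq,
        SimpleGraph.mem_incidenceFinset]
      constructor
      · rintro ⟨_, h⟩
        exact h
      · intro h
        exact ⟨SimpleGraph.edgeSet_mono hle h.1, h⟩
    rw [hsub]
    rw [SimpleGraph.card_incidenceFinset_eq_degree]
  have hQxhat : g none ⬝ᵥ (fLap G p *ᵥ g none) ≤ B := by
    rw [hgnone, Matrix.mulVec_smul, smul_dotProduct, dotProduct_smul, hQx₀,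
      smul_eq_mul, smul_eq_mul]
    have hinv : rr⁻¹ * (rr⁻¹ * ((mono G p i₀).degree v : ℝ))
        = (nR/(nR-1)) * ((mono G p i₀).degree v : ℝ) := by
      rw [← mul_assoc, ← mul_inv, hrr2, inv_div]
    rw [hinv, hB]
    apply mul_le_mul_of_nonneg_left _ (by positivity)
    exact_mod_cast hdeg
  have hQ : ∀ u ∈ Submodule.span ℝ (Set.range g),
      u ⬝ᵥ (fLap G p *ᵥ u) ≤ B * (u ⬝ᵥ u) := by
    intro u hu
    obtain ⟨c, hc⟩ := (Submodule.mem_span_range_iff_exists_fun ℝ).mp hu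
    have hLu : fLap G p *ᵥ u = c none • (fLap G p *ᵥ g none) := by
      rw [← hc, ← Matrix.mulVecLin_apply, map_sum]
      simp only [_root_.map_smul, Matrix.mulVecLin_apply]
      rw [Fintype.sum_option]
      simp [hLgsome]
    have hQu : u ⬝ᵥ (fLap G p *ᵥ u) =
        (c none * c none) * (g none ⬝ᵥ (fLap G p *ᵥ g none)) := by
      rw [hLu, dotProduct_smul]
      conv_lhs => rw [← hc]
      rw [aux_sum_dot, smul_eq_mul, Fintype.sum_option]
      have hz : ∀ i, g (some i) ⬝ᵥ (fLap G p *ᵥ g none) = 0 := by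
        intro i
        rw [hsymdot, hLgsome, zero_dotProduct]
      simp only [hz, mul_zero, Finset.sum_const_zero, add_zero]
      ring
    have hnu : u ⬝ᵥ u = ∑ o, c o * c o := by
      rw [← hc, aux_dot_sum g hg1 hg0]
    rw [hQu, hnu]
    have h1 : (c none * c none) * (g none ⬝ᵥ (fLap G p *ᵥ g none)) ≤ (c none * c none) * B :=
      mul_le_mul_of_nonneg_left hQxhat (mul_self_nonneg _)
    have h2 : c none * c none ≤ ∑ o, c o * c o :=
      Finset.single_le_sum (fun o _ => mul_self_nonneg (c o)) (Finset.mem_univ none)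
    calc (c none * c none) * (g none ⬝ᵥ (fLap G p *ᵥ g none))
        ≤ (c none * c none) * B := h1
      _ = B * (c none * c none) := by ring
      _ ≤ B * ∑ o, c o * c o := mul_le_mul_of_nonneg_left h2 hB0
  have hfin := aux_count hL g hg1 hg0 hQ
  rwa [Fintype.card_option, Fintype.card_fin] at hfin

end AuxProofs

/-- For `d ≥ 1` and a finite simple graph `G` with `n ≥ d+1` vertices,
`a(G, ℓ∞^d) ≤ (n/(n−1)) · ⌊(min_{v} deg_G(v))/d⌋`. -/
theorem algConnLinf_le_min_degree_bound {V : Type*} [Fintype V] [DecidableEq V] {d : ℕ}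
    (hd : 1 ≤ d) (G : SimpleGraph V) (hV : d + 1 ≤ Fintype.card V) :
    algConnLinf d G ≤
      ((Fintype.card V : ℝ) / ((Fintype.card V : ℝ) - 1)) * ((G.minDegree / d : ℕ) : ℝ) := by
  classical
  have hn2 : 2 ≤ Fintype.card V := by omega
  set B : ℝ := ((Fintype.card V : ℝ) / ((Fintype.card V : ℝ) - 1)) * ((G.minDegree / d : ℕ) : ℝ)
    with hBdef
  have hnR1 : (0:ℝ) < (Fintype.card V : ℝ) - 1 := by
    have h2 : (2:ℝ) ≤ (Fintype.card V : ℝ) := by exact_mod_cast hn2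
    linarith
  have hB0 : 0 ≤ B := by
    rw [hBdef]
    exact mul_nonneg (div_nonneg (by positivity) (le_of_lt hnR1)) (Nat.cast_nonneg _)
  apply Real.sSup_le _ hB0
  rintro t ⟨p, hp, rfl⟩
  have hL : (fLap G p).IsHermitian := by
    have hflap : fLap G p = (rigidity G p)ᴴ * rigidity G p := by
      rw [Matrix.conjTranspose_eq_transpose_of_trivial]
      rfl
    rw [hflap]
    exact Matrix.isHermitian_conjTranspose_mul_self _
  show (sortedEigs (fLap G p)).getD (d + 1 - 1) 0 ≤ B
  have hs : (sortedEigs (fLap G p)).Pairwise (· ≤ ·) :=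
    (fLap G p).charpoly.roots.pairwise_sort _
  have hcount : d + 1 ≤ (sortedEigs (fLap G p)).countP (fun x => decide (x ≤ B)) := by
    have h1 : (sortedEigs (fLap G p)).countP (fun x => decide (x ≤ B))
        = Multiset.countP (fun x => x ≤ B) ((fLap G p).charpoly.roots) := by
      rw [sortedEigs, ← Multiset.coe_countP, Multiset.sort_eq]
    rw [h1, aux_roots_eq hL, Multiset.countP_map, ← Finset.filter_val]
    have h2 := aux_perposition hd G hV p hp hBdef hL
    exact le_trans h2 (le_of_eq rfl)
  have := aux_sorted_getD_le hs (by simpa using hcount)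
  simpa using this
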